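/- Let e be a navigational expression over labeled graphs built from ∅, id, edge labels, composition, union, and transitive closure. If there exists a labeled tree T with nonempty evaluation of e on T, then there exists a labeled chain C with root r and leaf l such that (r,l) is in the evaluation of e on C. -/

import Mathlib

/-- A labeled tree: label-indexed edge relations whose union is acyclic,
with a unique root without incoming edges and exactly one incoming edge
(a parent together with a label) for every other node. -/
structure LTree (L V : Type) where
  edges : L → V → V → Prop
  acyclic : ∀ v, ¬ Relation.TransGen (fun m n => ∃ ℓ, edges ℓ m n) v v
  root : V
  root_no_in : ∀ m ℓ, ¬ edges ℓ m root
  in_unique : ∀ n, n ≠ root → ∃! p : V × L, edges p.2 p.1 n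

/-- A labeled chain: a labeled tree in which every node has at most one
child. -/
structure LChain (L V : Type) extends LTree L V where
  at_most_one_child :
    ∀ m n n', (∃ ℓ, edges ℓ m n) → (∃ ℓ, edges ℓ m n') → n = n'

/-- Navigational expressions: ∅, id, edge labels, composition, union,
and transitive closure. -/
inductive LExpr (L : Type) : Type
  | empty : LExpr L
  | id : LExpr L
  | label (ℓ : L) : LExpr L
  | comp (e₁ e₂ : LExpr L) : LExpr L
  | union (e₁ e₂ : LExpr L) : LExpr L
  | tc (e : LExpr L) : LExpr L

/-- Evaluation of an expression on a labeled graph. -/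
def LExpr.eval {L V : Type} (edges : L → V → V → Prop) :
    LExpr L → V → V → Prop
  | .empty => fun _ _ => False
  | .id => fun m n => m = n
  | .label ℓ => edges ℓ
  | .comp e₁ e₂ => Relation.Comp (e₁.eval edges) (e₂.eval edges)
  | .union e₁ e₂ => fun m n => e₁.eval edges m n ∨ e₂.eval edges m n
  | .tc e => Relation.TransGen (e.eval edges)

namespace Stmt9Aux

variable {L V : Type}

def tstep (T : LTree L V) (x y : V) : Prop := ∃ ℓ, T.edges ℓ x y

lemma evalSub (T : LTree L V) (e : LExpr L) :
    ∀ x y, e.eval T.edges x y → Relation.ReflTransGen (tstep T) x y := by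
  induction e with
  | empty => intro x y h; exact h.elim
  | id => intro x y h; exact h ▸ .refl
  | label ℓ => intro x y h; exact .single ⟨ℓ, h⟩
  | comp e₁ e₂ ih₁ ih₂ =>
      rintro x y ⟨k, h₁, h₂⟩; exact (ih₁ x k h₁).trans (ih₂ k y h₂)
  | union e₁ e₂ ih₁ ih₂ =>
      rintro x y (h | h); exacts [ih₁ x y h, ih₂ x y h]
  | tc e ih =>
      intro x y h
      induction h with
      | single h => exact ih _ _ h
      | tail _ h ih' => exact ih'.trans (ih _ _ h)

lemma parent_unique (T : LTree L V) {p q b : V}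
    (hp : tstep T p b) (hq : tstep T q b) : p = q := by
  obtain ⟨ℓ, hp⟩ := hp
  obtain ⟨ℓ', hq⟩ := hq
  have hb : b ≠ T.root := fun h => T.root_no_in p ℓ (h ▸ hp)
  obtain ⟨u, _, huniq⟩ := T.in_unique b hb
  have h1 := huniq (p, ℓ) hp
  have h2 := huniq (q, ℓ') hq
  have := congrArg Prod.fst h1
  have := congrArg Prod.fst h2
  simp_all

lemma comparable (T : LTree L V) {a c : V}
    (hac : Relation.ReflTransGen (tstep T) a c) :
    ∀ b, Relation.ReflTransGen (tstep T) b c →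
      Relation.ReflTransGen (tstep T) a b ∨ Relation.ReflTransGen (tstep T) b a := by
  induction hac with
  | refl => intro b hb; exact Or.inr hb
  | @tail x c hax hxc ih =>
      intro b hbc
      rcases hbc.cases_tail with h | ⟨y, hby, hyc⟩
      · subst h; exact Or.inl (hax.tail hxc)
      · have := parent_unique T hyc hxc
        subst this
        exact ih b hby

lemma restrict (T : LTree L V) (m n : V) (e : LExpr L) :
    ∀ (a b : {x : V // Relation.ReflTransGen (tstep T) m x ∧ Relation.ReflTransGen (tstep T) x n}),
      e.eval T.edges a.1 b.1 →
      e.eval (fun ℓ (p q : {x : V // Relation.ReflTransGen (tstep T) m x ∧ Relation.ReflTransGen (tstep T) x n}) => T.edges ℓ p.1 q.1) a b := by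
  induction e with
  | empty => intro a b h; exact h.elim
  | id => intro a b h; exact Subtype.ext h
  | label ℓ => intro a b h; exact h
  | comp e₁ e₂ ih₁ ih₂ =>
      rintro a b ⟨k, h₁, h₂⟩
      have hk : Relation.ReflTransGen (tstep T) m k ∧ Relation.ReflTransGen (tstep T) k n :=
        ⟨a.2.1.trans (evalSub T e₁ _ _ h₁), (evalSub T e₂ _ _ h₂).trans b.2.2⟩
      exact ⟨⟨k, hk⟩, ih₁ a ⟨k, hk⟩ h₁, ih₂ ⟨k, hk⟩ b h₂⟩
  | union e₁ e₂ ih₁ ih₂ =>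
      rintro a b (h | h)
      exacts [Or.inl (ih₁ a b h), Or.inr (ih₂ a b h)]
  | tc e ih =>
      intro a b h
      show Relation.TransGen _ a b
      have key : ∀ b' (_ : Relation.TransGen (e.eval T.edges) a.1 b')
          (hb : Relation.ReflTransGen (tstep T) m b' ∧ Relation.ReflTransGen (tstep T) b' n),
          Relation.TransGen
            (e.eval (fun ℓ (p q : {x : V // Relation.ReflTransGen (tstep T) m x ∧ Relation.ReflTransGen (tstep T) x n}) => T.edges ℓ p.1 q.1))
            a ⟨b', hb⟩ := by
        intro b' h hb
        induction h with
        | single h1 => exact .single (ih a ⟨_, hb⟩ h1)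
        | @tail k b' hk h1 ihh =>
            have hkS : Relation.ReflTransGen (tstep T) m k ∧ Relation.ReflTransGen (tstep T) k n := by
              constructor
              · exact a.2.1.trans (evalSub T (.tc e) _ _ hk)
              · exact (evalSub T e _ _ h1).trans hb.2
            exact (ihh hkS).tail (ih ⟨k, hkS⟩ ⟨b', hb⟩ h1)
      exact key b.1 h b.2

end Stmt9Aux

open Stmt9Aux

/-- If an expression of this language evaluates nonempty on some labeled
tree, then there is a labeled chain C with root r and leaf l such that
(r, l) is in the evaluation of the expression on C. -/
theorem stmt9 (L : Type) (e : LExpr L)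
    (hne : ∃ (V : Type) (_ : Fintype V) (T : LTree L V) (m n : V),
      e.eval T.edges m n) :
    ∃ (V : Type) (_ : Fintype V) (C : LChain L V) (l : V),
      (∀ x ℓ, ¬ C.edges ℓ l x) ∧ e.eval C.edges C.root l := by
  classical
  obtain ⟨V, instV, T, m, n, hmn⟩ := hne
  have hpath : Relation.ReflTransGen (tstep T) m n := evalSub T e m n hmn
  have noCycle : ∀ (x y : V), Relation.ReflTransGen (tstep T) x y → tstep T y x → False := by
    intro x y hxy hyx
    exact T.acyclic y (Relation.TransGen.head' hyx hxy)
  refine ⟨{x : V // Relation.ReflTransGen (tstep T) m x ∧ Relation.ReflTransGen (tstep T) x n},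
    inferInstance, ?_, ?_⟩
  refine ⟨{ edges := fun ℓ a b => T.edges ℓ a.1 b.1
            acyclic := ?_
            root := ⟨m, .refl, hpath⟩
            root_no_in := ?_
            in_unique := ?_ }, ?_⟩
  · intro v hv
    exact T.acyclic v.1 (Relation.TransGen.lift Subtype.val (fun a b h => h) _ _ hv)
  · rintro a ℓ h
    exact noCycle m a.1 a.2.1 ⟨ℓ, h⟩
  · intro b hb
    have hbm : b.1 ≠ m := fun h => hb (Subtype.ext h)
    rcases b.2.1.cases_tail with h | ⟨x, hmx, hxb⟩
    · exact absurd h hbm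
    · obtain ⟨ℓ, hx⟩ := hxb
      have hxS : Relation.ReflTransGen (tstep T) m x ∧ Relation.ReflTransGen (tstep T) x n :=
        ⟨hmx, Relation.ReflTransGen.head ⟨ℓ, hx⟩ b.2.2⟩
      refine ⟨(⟨x, hxS⟩, ℓ), hx, ?_⟩
      rintro ⟨q, ℓ'⟩ hq
      have hbroot : b.1 ≠ T.root := fun h => T.root_no_in x ℓ (h ▸ hx)
      obtain ⟨u, _, huniq⟩ := T.in_unique b.1 hbroot
      have h1 := huniq (q.1, ℓ') hq
      have h2 := huniq (x, ℓ) hx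
      have h3 : (q.1, ℓ') = (x, ℓ) := h1.trans h2.symm
      have hq1 : q.1 = x := congrArg Prod.fst h3
      have hl : ℓ' = ℓ := congrArg Prod.snd h3
      exact Prod.ext (Subtype.ext hq1) hl
  · rintro a b b' ⟨ℓ₁, hℓ₁⟩ ⟨ℓ₂, hℓ₂⟩
    have key : ∀ (p q : V) ℓ₁ ℓ₂, T.edges ℓ₁ a.1 p → T.edges ℓ₂ a.1 q →
        Relation.ReflTransGen (tstep T) p q → p = q := by
      intro p q l1 l2 hp hq hpq
      rcases hpq.cases_tail with h | ⟨x, hpx, hxq⟩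
      · exact h.symm
      · have hx : x = a.1 := parent_unique T hxq ⟨l2, hq⟩
        subst hx
        exact absurd (Relation.TransGen.head' ⟨l1, hp⟩ hpx) (T.acyclic a.1)
    rcases comparable T b.2.2 b'.1 b'.2.2 with h | h
    · exact Subtype.ext (key b.1 b'.1 ℓ₁ ℓ₂ hℓ₁ hℓ₂ h)
    · exact Subtype.ext (key b'.1 b.1 ℓ₂ ℓ₁ hℓ₂ hℓ₁ h).symm
  · refine ⟨⟨n, hpath, .refl⟩, ?_, ?_⟩
    · rintro x ℓ h
      exact noCycle x.1 n x.2.2 ⟨ℓ, h⟩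
    · exact restrict T m n e ⟨m, .refl, hpath⟩ ⟨n, hpath, .refl⟩ hmn
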